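/- Let P = (H, V, τ, A) be a span program on [q]^n, let x ∈ [q]^n have a positive witness with witness size w(P, x), let C ≥ 2, and let α > 0 satisfy α² ≥ C·w(P, x). Then ‖P_0(U(P, x, α)) |0̂⟩‖² ≥ α² / (α² + w(P, x)) ≥ 1 − 1/C. -/

import Mathlib

noncomputable section

/-- A span program `P = (H, V, τ, A)` on `[q]^m`:
finite-dimensional complex inner product spaces `H` and `V`, an orthogonal
decomposition `H = H_1 ⊕ ⋯ ⊕ H_m ⊕ H_true ⊕ H_false`, subspaces
`H_{j,a} ⊆ H_j` with `Σ_a H_{j,a} = H_j`, a target `τ ∈ V` and `A : H → V`. -/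
structure SpanProgram (q m : ℕ) where
  H : Type
  V : Type
  [nH : NormedAddCommGroup H]
  [iH : InnerProductSpace ℂ H]
  [fH : FiniteDimensional ℂ H]
  [nV : NormedAddCommGroup V]
  [iV : InnerProductSpace ℂ V]
  [fV : FiniteDimensional ℂ V]
  Hj : Fin m → Submodule ℂ H
  Htrue : Submodule ℂ H
  Hfalse : Submodule ℂ H
  ortho : ∀ i i' : Fin m ⊕ Bool, i ≠ i' →
    (Sum.elim Hj (fun b => if b then Htrue else Hfalse) i).IsOrtho
      (Sum.elim Hj (fun b => if b then Htrue else Hfalse) i')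
  spans : (⨆ j, Hj j) ⊔ Htrue ⊔ Hfalse = ⊤
  Hja : Fin m → Fin q → Submodule ℂ H
  Hja_le : ∀ j a, Hja j a ≤ Hj j
  Hja_sup : ∀ j, (⨆ a, Hja j a) = Hj j
  tau : V
  A : H →ₗ[ℂ] V

attribute [instance] SpanProgram.nH SpanProgram.iH SpanProgram.fH
attribute [instance] SpanProgram.nV SpanProgram.iV SpanProgram.fV

namespace SpanProgram

variable {q m : ℕ} (P : SpanProgram q m)

/-- `H(x) = H_{1,x_1} ⊕ ⋯ ⊕ H_{m,x_m} ⊕ H_true`. -/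
def Hx (x : Fin m → Fin q) : Submodule ℂ P.H :=
  (⨆ j, P.Hja j (x j)) ⊔ P.Htrue

/-- `w` is a positive witness for `x`: `w ∈ H(x)` and `A w = τ`. -/
def PosWitness (x : Fin m → Fin q) (w : P.H) : Prop :=
  w ∈ P.Hx x ∧ P.A w = P.tau

/-- `ω` is a negative witness for `x`: `ω(τ) = 1` and `ω ∘ A ∘ Π_{H(x)} = 0`. -/
def NegWitness (x : Fin m → Fin q) (ω : P.V →ₗ[ℂ] ℂ) : Prop :=
  ω P.tau = 1 ∧ ∀ h ∈ P.Hx x, ω (P.A h) = 0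

def HasPos (x : Fin m → Fin q) : Prop := ∃ w, P.PosWitness x w

def HasNeg (x : Fin m → Fin q) : Prop := ∃ ω, P.NegWitness x ω

/-- positive witness size: `min{‖w‖² : w a positive witness for x}`. -/
def posSize (x : Fin m → Fin q) : ℝ :=
  sInf {r : ℝ | ∃ w, P.PosWitness x w ∧ r = ‖w‖ ^ 2}

/-- negative witness size: `min{‖ω∘A‖² : ω a negative witness for x}`, where
`‖ω∘A‖` is the norm of (the Riesz representative of) the functional `ω∘A`. -/
def negSize (x : Fin m → Fin q) : ℝ :=
  sInf {r : ℝ | ∃ ω, P.NegWitness x ω ∧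
    r = ‖LinearMap.toContinuousLinearMap (ω ∘ₗ P.A)‖ ^ 2}

open Classical in
/-- the witness size `w(P,x)`. -/
def witSize (x : Fin m → Fin q) : ℝ :=
  if P.HasPos x then P.posSize x else P.negSize x

/-- `P` decides `f` on `X`: every `x ∈ X` with `f x = 1` has a positive witness and
every `x ∈ X` with `f x = 0` has a negative witness. -/
def Decides (X : Set (Fin m → Fin q)) (f : (Fin m → Fin q) → Bool) : Prop :=
  ∀ x ∈ X, (f x = true → P.HasPos x) ∧ (f x = false → P.HasNeg x)

end SpanProgram


namespace SpanProgram

variable {q m : ℕ} (P : SpanProgram q m)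

/-- `H̃ = H ⊕ ℂ|0̂⟩` (with the `L²` direct-sum inner product). -/
def Htilde : Type := WithLp 2 (P.H × ℂ)

instance : NormedAddCommGroup P.Htilde :=
  inferInstanceAs (NormedAddCommGroup (WithLp 2 (P.H × ℂ)))
instance : InnerProductSpace ℂ P.Htilde :=
  inferInstanceAs (InnerProductSpace ℂ (WithLp 2 (P.H × ℂ)))
instance : FiniteDimensional ℂ P.Htilde :=
  inferInstanceAs (FiniteDimensional ℂ (WithLp 2 (P.H × ℂ)))

/-- the canonical linear identification of `H̃` with `H × ℂ`. -/
def tildeEquiv : P.Htilde ≃ₗ[ℂ] P.H × ℂ := WithLp.linearEquiv 2 ℂ (P.H × ℂ)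

/-- the unit vector `|0̂⟩ ∈ H̃`, orthogonal to `H`. -/
def zeroHat : P.Htilde := P.tildeEquiv.symm (0, 1)

/-- the isometric embedding of `H` into `H̃`. -/
def embed : P.H →ₗ[ℂ] P.Htilde :=
  P.tildeEquiv.symm.toLinearMap ∘ₗ LinearMap.inl ℂ P.H ℂ

/-- `A_α : H̃ → V`, with `A_α|0̂⟩ = τ/α` and `A_α = A` on `H`. -/
def Aalpha (α : ℝ) : P.Htilde →ₗ[ℂ] P.V :=
  (P.A.coprod (LinearMap.toSpanSingleton ℂ P.V (((α : ℂ))⁻¹ • P.tau))) ∘ₗ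
    P.tildeEquiv.toLinearMap

/-- `H̃(x) = H(x) ⊕ ℂ|0̂⟩`. -/
def HxTilde (x : Fin m → Fin q) : Submodule ℂ P.Htilde :=
  ((P.Hx x).prod (⊤ : Submodule ℂ ℂ)).comap P.tildeEquiv.toLinearMap

/-- orthogonal projection onto a submodule, as an endomorphism. -/
def projL (S : Submodule ℂ P.Htilde) : P.Htilde →ₗ[ℂ] P.Htilde :=
  S.subtype ∘ₗ (S.orthogonalProjection).toLinearMap

/-- `Λ_α`: the orthogonal projection of `H̃` onto `ker A_α`. -/
def Lambda (α : ℝ) : P.Htilde →ₗ[ℂ] P.Htilde :=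
  P.projL (LinearMap.ker (P.Aalpha α))

/-- `Π_x`: the orthogonal projection of `H̃` onto `H̃(x)`. -/
def Pix (x : Fin m → Fin q) : P.Htilde →ₗ[ℂ] P.Htilde :=
  P.projL (P.HxTilde x)

/-- `U(P, x, α) = (2Π_x − I)(2Λ_α − I)`. -/
def U (x : Fin m → Fin q) (α : ℝ) : P.Htilde →ₗ[ℂ] P.Htilde :=
  (2 • P.Pix x - LinearMap.id) ∘ₗ (2 • P.Lambda α - LinearMap.id)

end SpanProgram


namespace SpanProgram

variable {q m : ℕ} (P : SpanProgram q m)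

lemma projL_eq_self {S : Submodule ℂ P.Htilde} {v : P.Htilde} (hv : v ∈ S) :
    P.projL S v = v := by
  exact S.starProjection_eq_self_iff.mpr hv

lemma overlap_lower (x : Fin m → Fin q) (α : ℝ) (hα : 0 < α)
    (w : P.H) (hw : P.PosWitness x w) :
    α ^ 2 / (α ^ 2 + ‖w‖ ^ 2) ≤
      ‖P.projL (Module.End.eigenspace (P.U x α) 1) P.zeroHat‖ ^ 2 := by
  set u : P.Htilde := P.zeroHat - ((α : ℂ)⁻¹) • P.embed w with hu_def
  have hAw : P.A w = P.tau := hw.2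
  have hαC : (α : ℂ) ≠ 0 := by exact_mod_cast ne_of_gt hα
  -- u is in ker A_α
  have hker : u ∈ LinearMap.ker (P.Aalpha α) := by
    rw [LinearMap.mem_ker]
    simp [hu_def, SpanProgram.Aalpha, SpanProgram.zeroHat, SpanProgram.embed,
      map_sub, map_smul, LinearMap.coprod_apply,
      LinearMap.toSpanSingleton_apply, hAw, LinearEquiv.coe_coe]
  -- componentwise description of u
  have h0 : P.tildeEquiv u = (-((α : ℂ)⁻¹) • w, 1) := by
    simp [hu_def, SpanProgram.zeroHat, SpanProgram.embed,
      map_sub, map_smul]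
  have hfst : u.fst = -((α : ℂ)⁻¹) • w := congrArg Prod.fst h0
  have hsnd : u.snd = (1 : ℂ) := congrArg Prod.snd h0
  -- u is in H̃(x)
  have hmem : u ∈ P.HxTilde x := by
    rw [SpanProgram.HxTilde, Submodule.mem_comap, LinearEquiv.coe_coe, h0,
      Submodule.mem_prod]
    exact ⟨Submodule.smul_mem _ _ hw.1, trivial⟩
  -- u is fixed by U
  have hfix : u ∈ Module.End.eigenspace (P.U x α) 1 := by
    rw [Module.End.mem_eigenspace_iff, one_smul]
    have h1 : P.Lambda α u = u := P.projL_eq_self hker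
    have h2 : P.Pix x u = u := P.projL_eq_self hmem
    simp [SpanProgram.U, LinearMap.comp_apply, LinearMap.sub_apply,
      LinearMap.smul_apply, h1, h2, two_smul]
  -- inner product of u with zeroHat is 1
  have hinner : (inner ℂ u P.zeroHat : ℂ) = 1 := by
    change inner ℂ u.fst P.zeroHat.fst + inner ℂ u.snd P.zeroHat.snd = 1
    have hz1 : P.zeroHat.fst = (0 : P.H) := rfl
    have hz2 : P.zeroHat.snd = (1 : ℂ) := rfl
    rw [hz1, hz2, hsnd]
    simp
  -- norm of u
  have hnorm : ‖u‖ ^ 2 = α⁻¹ ^ 2 * ‖w‖ ^ 2 + 1 := by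
    rw [show ‖u‖ ^ 2 = ‖u.fst‖ ^ 2 + ‖u.snd‖ ^ 2 from WithLp.prod_norm_sq_eq_of_L2 u, hfst, hsnd]
    have : ‖-((α : ℂ)⁻¹) • w‖ = α⁻¹ * ‖w‖ := by
      rw [norm_smul, norm_neg, norm_inv, Complex.norm_real,
        Real.norm_of_nonneg hα.le]
    rw [this]
    simp [mul_pow]
  -- the projection of zeroHat onto the eigenspace
  set E := Module.End.eigenspace (P.U x α) 1
  have hp : P.projL E P.zeroHat = (E.orthogonalProjection P.zeroHat : P.Htilde) := rfl
  have hip : (inner ℂ u (P.projL E P.zeroHat) : ℂ) = 1 := by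
    rw [hp, ← Submodule.starProjection_apply, ← Submodule.inner_starProjection_left_eq_right,
      Submodule.starProjection_eq_self_iff.mpr hfix, hinner]
  have hcs : 1 ≤ ‖u‖ * ‖P.projL E P.zeroHat‖ := by
    have := norm_inner_le_norm (𝕜 := ℂ) u (P.projL E P.zeroHat)
    rwa [hip, norm_one] at this
  have hsq : 1 ≤ ‖u‖ ^ 2 * ‖P.projL E P.zeroHat‖ ^ 2 := by
    nlinarith [norm_nonneg u, norm_nonneg (P.projL E P.zeroHat)]
  rw [hnorm] at hsq
  rw [div_le_iff₀ (by positivity)]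
  have hα2 : (0:ℝ) < α ^ 2 := by positivity
  calc α ^ 2 = α ^ 2 * 1 := (mul_one _).symm
    _ ≤ α ^ 2 * ((α⁻¹ ^ 2 * ‖w‖ ^ 2 + 1) * ‖P.projL E P.zeroHat‖ ^ 2) :=
        mul_le_mul_of_nonneg_left hsq hα2.le
    _ = ‖P.projL E P.zeroHat‖ ^ 2 * (α ^ 2 + ‖w‖ ^ 2) := by
        field_simp
        ring

end SpanProgram

/-- if `x` has a positive witness, `C ≥ 2` and `α² ≥ C·w(P,x)`, then
`‖P_0(U(P,x,α))|0̂⟩‖² ≥ α²/(α² + w(P,x)) ≥ 1 − 1/C`. -/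
theorem positive_case_overlap {q n : ℕ} (hq : 2 ≤ q) (hn : 1 ≤ n)
    (P : SpanProgram q n) (x : Fin n → Fin q) (hx : P.HasPos x)
    (C : ℝ) (hC : 2 ≤ C) (α : ℝ) (hα : 0 < α)
    (hCα : C * P.posSize x ≤ α ^ 2) :
    α ^ 2 / (α ^ 2 + P.posSize x) ≤
        ‖P.projL (Module.End.eigenspace (P.U x α) 1) P.zeroHat‖ ^ 2 ∧
      1 - 1 / C ≤ α ^ 2 / (α ^ 2 + P.posSize x) := by
  obtain ⟨w0, hw0⟩ := hx
  set N := ‖P.projL (Module.End.eigenspace (P.U x α) 1) P.zeroHat‖ ^ 2 with hN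
  have hα2 : (0:ℝ) < α ^ 2 := by positivity
  have hSne : {r : ℝ | ∃ w, P.PosWitness x w ∧ r = ‖w‖ ^ 2}.Nonempty :=
    ⟨_, w0, hw0, rfl⟩
  have hs0 : 0 ≤ P.posSize x := by
    rw [SpanProgram.posSize]
    apply le_csInf hSne
    rintro r ⟨w, _, rfl⟩
    positivity
  set s := P.posSize x with hs
  have hNlow : ∀ w, P.PosWitness x w → α ^ 2 / (α ^ 2 + ‖w‖ ^ 2) ≤ N :=
    fun w hw => P.overlap_lower x α hα w hw
  have hNpos : 0 < N := lt_of_lt_of_le (by positivity) (hNlow w0 hw0)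
  have hkey : α ^ 2 ≤ N * (α ^ 2 + s) := by
    have hlb : α ^ 2 / N - α ^ 2 ≤ s := by
      rw [hs, SpanProgram.posSize]
      apply le_csInf hSne
      rintro r ⟨w, hw, rfl⟩
      have hpos : (0:ℝ) < α ^ 2 + ‖w‖ ^ 2 := by positivity
      have h2 : α ^ 2 ≤ N * (α ^ 2 + ‖w‖ ^ 2) := (div_le_iff₀ hpos).mp (hNlow w hw)
      rw [sub_le_iff_le_add, div_le_iff₀ hNpos]
      nlinarith
    rw [sub_le_iff_le_add, div_le_iff₀ hNpos] at hlb
    nlinarith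
  have hCpos : (0:ℝ) < C := by linarith
  constructor
  · rw [div_le_iff₀ (by positivity)]
    nlinarith
  · rw [le_div_iff₀ (by positivity)]
    have h2 : s ≤ (α ^ 2 + s) / C := by
      rw [le_div_iff₀ hCpos]
      nlinarith
    have h3 : (1 - 1 / C) * (α ^ 2 + s) = (α ^ 2 + s) - (α ^ 2 + s) / C := by
      field_simp
    linarith
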